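/- Let {H^i}_{i=1}^d be an orthonormal basis of 𝔥 and define L_p := (1/2) Σ_{n∈ℤ} Σ_{i=1}^d :H^i_n H^i_{p-n}: as operators on the Fock representation π of the Heisenberg algebra ĥ. Then these operators satisfy the Virasoro relations [L_p, L_q] = (p-q) L_{p+q} + (d/12)(p³-p) δ_{p,-q}·id, i.e. the Fock representation carries a Virasoro action of central charge d. -/
import Mathlib


/-- The normally ordered quadratic operator `Σ_{i=1}^d :H^i_x H^i_y:` on the Fock
representation: normal ordering places the operator with larger index to the right
(i.e. it acts first). -/
noncomputable def normQuad {d : ℕ} {π : Type*} [AddCommGroup π] [Module ℂ π]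
    (H : Fin d → ℤ → Module.End ℂ π) (x y : ℤ) : Module.End ℂ π :=
  ∑ i, if x ≤ y then H i x * H i y else H i y * H i x

namespace VirasoroAux

lemma Icc_split {β : Type*} [AddCommMonoid β] {a b c : ℤ} (h1 : a - 1 ≤ b) (h2 : b ≤ c)
    (f : ℤ → β) :
    ∑ m ∈ Finset.Icc a c, f m = ∑ m ∈ Finset.Icc a b, f m + ∑ m ∈ Finset.Icc (b+1) c, f m := by
  rw [← Finset.sum_union]
  · congr 1; ext x; simp only [Finset.mem_union, Finset.mem_Icc]; omega
  · rw [Finset.disjoint_left]; intro x hx hx'; simp only [Finset.mem_Icc] at hx hx'; omega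

lemma Icc_succ {a b : ℤ} (h : a ≤ b + 1) :
    Finset.Icc a (b+1) = insert (b+1) (Finset.Icc a b) := by
  ext x; simp only [Finset.mem_Icc, Finset.mem_insert]; omega

lemma gsum1 (a : ℤ) : ∀ b : ℤ, a - 1 ≤ b →
    2 * (∑ m ∈ Finset.Icc a b, m) = b*(b+1) - (a-1)*a := by
  refine Int.le_induction ?_ ?_
  · rw [Finset.Icc_eq_empty (by omega)]; simp
  · intro b hb ih
    rw [Icc_succ (by omega), Finset.sum_insert (by simp)]
    ring_nf; ring_nf at ih; linarith

lemma gsum2 (a : ℤ) : ∀ b : ℤ, a - 1 ≤ b →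
    6 * (∑ m ∈ Finset.Icc a b, m^2) = b*(b+1)*(2*b+1) - (a-1)*a*(2*a-1) := by
  refine Int.le_induction ?_ ?_
  · rw [Finset.Icc_eq_empty (by omega)]; simp; ring
  · intro b hb ih
    rw [Icc_succ (by omega), Finset.sum_insert (by simp)]
    ring_nf; ring_nf at ih; linarith

lemma keyPos (p M : ℤ) (hp : 0 ≤ p) (hM : 0 ≤ M) :
    12*p*(∑ m ∈ Finset.Icc 1 M, m) - 6*(∑ m ∈ Finset.Icc (M+1) (p+M), (m-p)*m) = p^3 - p := by
  have h1 := gsum1 1 M (by omega)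
  have h2 := gsum1 (M+1) (p+M) (by omega)
  have h3 := gsum2 (M+1) (p+M) (by omega)
  have e : ∑ m ∈ Finset.Icc (M+1) (p+M), (m-p)*m
      = (∑ m ∈ Finset.Icc (M+1) (p+M), m^2) - p*(∑ m ∈ Finset.Icc (M+1) (p+M), m) := by
    rw [Finset.mul_sum, ← Finset.sum_sub_distrib]
    exact Finset.sum_congr rfl (fun x _ => by ring)
  rw [e]; linear_combination 6*p*h1 + 3*p*h2 - h3

lemma keyNeg (p M : ℤ) (hp : p ≤ 0) (hM : 0 ≤ M) :
    12*p*(∑ m ∈ Finset.Icc 1 M, m) + 6*(∑ m ∈ Finset.Icc (p+M+1) M, (m-p)*m) = p^3 - p := by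
  have h1 := gsum1 1 M (by omega)
  have h2 := gsum1 (p+M+1) M (by omega)
  have h3 := gsum2 (p+M+1) M (by omega)
  have e : ∑ m ∈ Finset.Icc (p+M+1) M, (m-p)*m
      = (∑ m ∈ Finset.Icc (p+M+1) M, m^2) - p*(∑ m ∈ Finset.Icc (p+M+1) M, m) := by
    rw [Finset.mul_sum, ← Finset.sum_sub_distrib]
    exact Finset.sum_congr rfl (fun x _ => by ring)
  rw [e]; linear_combination 6*p*h1 - 3*p*h2 + h3

variable {d : ℕ} {π : Type*} [AddCommGroup π] [Module ℂ π]
  {H : Fin d → ℤ → Module.End ℂ π} {L : ℤ → Module.End ℂ π}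
  (hcomm : ∀ (i j : Fin d) (m n : ℤ),
      ⁅H i m, H j n⁆ = (if i = j ∧ m + n = 0 then (m : ℂ) else 0) • (1 : Module.End ℂ π))

include hcomm

lemma swapH (i j : Fin d) (a b : ℤ) (v : π) :
    H i a (H j b v) = H j b (H i a v) + (if i = j ∧ a + b = 0 then (a:ℂ) else 0) • v := by
  have h := hcomm i j a b
  rw [Ring.lie_def] at h
  have h2 := DFunLike.congr_fun h v
  simp only [LinearMap.sub_apply, Module.End.mul_apply, LinearMap.smul_apply,
    Module.End.one_apply] at h2
  linear_combination (norm := module) h2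

lemma annQ (v : π) {N : ℤ} (hN : ∀ (i : Fin d) (n : ℤ), N ≤ n → H i n v = 0)
    (i : Fin d) {n x y : ℤ} (hn : N ≤ n) (hx : n + x ≠ 0) (hy : n + y ≠ 0) :
    H i n (normQuad H x y v) = 0 := by
  have key : ∀ a b : ℤ, n + a ≠ 0 → n + b ≠ 0 → ∀ j, H i n (H j a (H j b v)) = 0 := by
    intro a b ha hb j
    rw [swapH hcomm i j n a, swapH hcomm i j n b, hN i n hn]
    simp only [map_zero, zero_add]
    rw [if_neg (by tauto), if_neg (by tauto)]
    simp
  unfold normQuad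
  rw [LinearMap.sum_apply, map_sum]
  refine Finset.sum_eq_zero fun j _ => ?_
  split_ifs <;> simp only [Module.End.mul_apply] <;> [exact key x y hx hy j; exact key y x hy hx j]

lemma FQ (v : π) (x y : ℤ) :
    ∑ j, H j x (H j y v)
      = normQuad H x y v + (if y < x ∧ x + y = 0 then (x:ℂ)*(d:ℂ) else 0) • v := by
  unfold normQuad
  rw [LinearMap.sum_apply]
  by_cases hxy : x ≤ y
  · rw [if_neg (by intro h; omega)]
    simp only [if_pos hxy, Module.End.mul_apply, zero_smul, add_zero]
  · push_neg at hxy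
    simp only [if_neg (not_le.2 hxy), Module.End.mul_apply]
    by_cases h0 : x + y = 0
    · rw [if_pos ⟨hxy, h0⟩]
      have e : ∀ j : Fin d, H j x (H j y v) = H j y (H j x v) + (x:ℂ) • v := by
        intro j; rw [swapH hcomm j j x y, if_pos ⟨rfl, h0⟩]
      rw [Finset.sum_congr rfl (fun j _ => e j), Finset.sum_add_distrib,
        Finset.sum_const, Finset.card_univ, Fintype.card_fin]
      congr 1
      rw [← Nat.cast_smul_eq_nsmul ℂ, smul_smul, mul_comm]
    · rw [if_neg (by tauto), zero_smul, add_zero]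
      refine Finset.sum_congr rfl fun j _ => ?_
      rw [swapH hcomm j j x y, if_neg (by tauto), zero_smul, add_zero]

lemma qswap (j : Fin d) (m x y : ℤ) (v : π) :
    normQuad H x y (H j m v) = H j m (normQuad H x y v)
      + ∑ i, ((if i = j ∧ x + m = 0 then (x:ℂ) else 0) • H i y v
          + (if i = j ∧ y + m = 0 then (y:ℂ) else 0) • H i x v) := by
  unfold normQuad
  rw [LinearMap.sum_apply, LinearMap.sum_apply, map_sum, ← Finset.sum_add_distrib]
  refine Finset.sum_congr rfl fun i _ => ?_
  by_cases hxy : x ≤ y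
  · simp only [if_pos hxy, Module.End.mul_apply]
    rw [swapH hcomm i j y m, map_add, map_smul, swapH hcomm i j x m (H i y v)]
    module
  · simp only [if_neg hxy, Module.End.mul_apply]
    rw [swapH hcomm i j x m, map_add, map_smul, swapH hcomm i j y m (H i x v)]
    module

variable (hloc : ∀ v : π, ∃ N : ℤ, ∀ (i : Fin d) (n : ℤ), N ≤ n → H i n v = 0)
    (hL : ∀ (p : ℤ) (v : π) (N : ℤ), (∀ (i : Fin d) (n : ℤ), N ≤ n → H i n v = 0) →
      ∀ M : ℤ, N ≤ M → N - p ≤ M →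
        L p v = (2 : ℂ)⁻¹ • ∑ n ∈ Finset.Icc (-M) M, normQuad H n (p - n) v)

include hloc hL

lemma lemA (p : ℤ) (j : Fin d) (m : ℤ) (v : π) :
    L p (H j m v) = H j m (L p v) - (m:ℂ) • H j (p+m) v := by
  obtain ⟨N, hN⟩ := hloc v
  have hpm := le_abs_self p; have hpm' := neg_abs_le p; have hp0 := abs_nonneg p
  have hmm := le_abs_self m; have hmm' := neg_abs_le m; have hm0 := abs_nonneg m
  have hqq := le_abs_self (p+m); have hqq' := neg_abs_le (p+m); have hq0 := abs_nonneg (p+m)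
  set N' : ℤ := max N (|m|+1) with hN'def
  have hNN' : N ≤ N' := le_max_left _ _
  have hmN' : |m| + 1 ≤ N' := le_max_right _ _
  have hN' : ∀ (i : Fin d) (n : ℤ), N' ≤ n → H i n (H j m v) = 0 := by
    intro i n hn
    rw [swapH hcomm i j n m, hN i n (by omega), map_zero, zero_add,
      if_neg (by rintro ⟨-, h⟩; omega), zero_smul]
  set K : ℤ := N' + |p| + |m| + |p+m| with hKdef
  have h1 := hL p (H j m v) N' hN' K (by omega) (by omega)
  have h2 := hL p v N hN K (by omega) (by omega)
  have hq1 : ∀ n ∈ Finset.Icc (-K) K, normQuad H n (p-n) (H j m v)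
      = H j m (normQuad H n (p-n) v)
      + ∑ i, ((if i = j ∧ n + m = 0 then (n:ℂ) else 0) • H i (p-n) v
          + (if i = j ∧ (p-n) + m = 0 then ((p-n : ℤ):ℂ) else 0) • H i n v) :=
    fun n _ => qswap hcomm j m n (p-n) v
  have hC : ∑ n ∈ Finset.Icc (-K) K,
      (∑ i, ((if i = j ∧ n + m = 0 then (n:ℂ) else 0) • H i (p-n) v
          + (if i = j ∧ (p-n) + m = 0 then ((p-n : ℤ):ℂ) else 0) • H i n v))
      = (-(2*m) : ℂ) • H j (p+m) v := by
    have inner : ∀ n : ℤ,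
        (∑ i, ((if i = j ∧ n + m = 0 then (n:ℂ) else 0) • H i (p-n) v
          + (if i = j ∧ (p-n) + m = 0 then ((p-n : ℤ):ℂ) else 0) • H i n v))
        = (if n + m = 0 then (n:ℂ) else 0) • H j (p-n) v
          + (if (p-n) + m = 0 then ((p-n : ℤ):ℂ) else 0) • H j n v := by
      intro n
      rw [Finset.sum_add_distrib]
      congr 1 <;>
      · simp only [ite_and, ite_smul, zero_smul]
        rw [Finset.sum_ite_eq' Finset.univ j]
        simp
    rw [Finset.sum_congr rfl fun n _ => inner n, Finset.sum_add_distrib]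
    have e1 : ∑ n ∈ Finset.Icc (-K) K, (if n + m = 0 then (n:ℂ) else 0) • H j (p-n) v
        = (-m : ℂ) • H j (p+m) v := by
      rw [Finset.sum_eq_single_of_mem (-m) (by simp only [Finset.mem_Icc]; omega)
        (fun n _ hn => by rw [if_neg (by omega), zero_smul])]
      rw [if_pos (by omega)]
      norm_num [sub_neg_eq_add]
    have e2 : ∑ n ∈ Finset.Icc (-K) K,
        (if (p-n) + m = 0 then ((p-n : ℤ):ℂ) else 0) • H j n v
        = (-m : ℂ) • H j (p+m) v := by
      rw [Finset.sum_eq_single_of_mem (p+m) (by simp only [Finset.mem_Icc]; omega)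
        (fun n _ hn => by rw [if_neg (by omega), zero_smul])]
      rw [if_pos (by omega), show p - (p+m) = -m by ring]
      push_cast
      ring_nf
    rw [e1, e2]; module
  rw [h1, Finset.sum_congr rfl hq1, Finset.sum_add_distrib, hC, ← map_sum, h2, map_smul]
  match_scalars <;> ring

lemma step2 (p x y : ℤ) (v : π) :
    L p (normQuad H x y v) = normQuad H x y (L p v)
      - ∑ j, ((y:ℂ) • H j x (H j (p+y) v) + (x:ℂ) • H j (p+x) (H j y v)) := by
  unfold normQuad
  rw [LinearMap.sum_apply, LinearMap.sum_apply, map_sum, ← Finset.sum_sub_distrib]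
  refine Finset.sum_congr rfl fun j _ => ?_
  by_cases hxy : x ≤ y
  · simp only [if_pos hxy, Module.End.mul_apply]
    rw [lemA hcomm hloc hL p j x (H j y v), lemA hcomm hloc hL p j y v, map_sub, map_smul]
    module
  · simp only [if_neg hxy, Module.End.mul_apply]
    rw [lemA hcomm hloc hL p j y (H j x v), lemA hcomm hloc hL p j x v, map_sub, map_smul]
    rw [swapH hcomm j j y (p+x) v, swapH hcomm j j (p+y) x v]
    simp only [eq_self_iff_true, true_and]
    by_cases hc : y + (p+x) = 0
    · rw [if_pos hc, if_pos (by omega)]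
      have hcC : (y:ℂ) + ((p:ℂ)+(x:ℂ)) = 0 := by exact_mod_cast hc
      match_scalars <;>
        first
          | linear_combination -hcC
          | linear_combination (-1 - (y:ℂ)) * hcC
          | linear_combination (-(y:ℂ)) * hcC
          | ring
    · rw [if_neg hc, if_neg (by omega)]
      module

end VirasoroAux

open VirasoroAux

/-- Let `{H^i}_{i=1}^d` be an orthonormal basis of `𝔥` acting on the Fock representation
`π` of the Heisenberg algebra (so `[H^i_n, H^j_m] = δ_{ij} n δ_{n,-m}·id` and each vector
is annihilated by all `H^i_n` for `n` large), and let
`L_p = (1/2) Σ_{n∈ℤ} Σ_{i=1}^d :H^i_n H^i_{p-n}:` (the locally finite normally ordered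
sum, characterized by its finite truncations).  Then the operators `L_p` satisfy the
Virasoro relations `[L_p, L_q] = (p-q) L_{p+q} + (d/12)(p³-p) δ_{p,-q}·id`, i.e. the Fock
representation carries a Virasoro action of central charge `d`. -/
theorem virasoro_action_on_fock (d : ℕ) (π : Type*) [AddCommGroup π] [Module ℂ π]
    (H : Fin d → ℤ → Module.End ℂ π)
    (hcomm : ∀ (i j : Fin d) (m n : ℤ),
      ⁅H i m, H j n⁆ = (if i = j ∧ m + n = 0 then (m : ℂ) else 0) • (1 : Module.End ℂ π))
    (hloc : ∀ v : π, ∃ N : ℤ, ∀ (i : Fin d) (n : ℤ), N ≤ n → H i n v = 0)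
    (L : ℤ → Module.End ℂ π)
    (hL : ∀ (p : ℤ) (v : π) (N : ℤ), (∀ (i : Fin d) (n : ℤ), N ≤ n → H i n v = 0) →
      ∀ M : ℤ, N ≤ M → N - p ≤ M →
        L p v = (2 : ℂ)⁻¹ • ∑ n ∈ Finset.Icc (-M) M, normQuad H n (p - n) v) :
    ∀ p q : ℤ,
      ⁅L p, L q⁆ = ((p : ℂ) - (q : ℂ)) • L (p + q) +
        (if p + q = 0 then ((d : ℂ) / 12) * ((p : ℂ) ^ 3 - (p : ℂ)) else 0) •
          (1 : Module.End ℂ π) := by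
  intro p q
  apply LinearMap.ext
  intro v
  rw [Ring.lie_def]
  simp only [LinearMap.sub_apply, Module.End.mul_apply, LinearMap.add_apply,
    LinearMap.smul_apply, Module.End.one_apply]
  -- setup
  obtain ⟨N, hN⟩ := hloc v
  have hp' := le_abs_self p; have hp'' := neg_abs_le p; have hp0 := abs_nonneg p
  have hqa := le_abs_self q; have hqa' := neg_abs_le q; have hq0 := abs_nonneg q
  set N₀ : ℤ := max N 1 with hN₀def
  have hN₀1 : (1:ℤ) ≤ N₀ := le_max_right _ _
  have hNN₀ : N ≤ N₀ := le_max_left _ _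
  have hN₀ : ∀ (i : Fin d) (n : ℤ), N₀ ≤ n → H i n v = 0 :=
    fun i n hn => hN i n (by omega)
  set M₁ : ℤ := N₀ + |p| with hM₁def
  have hLp : L p v = (2:ℂ)⁻¹ • ∑ k ∈ Finset.Icc (-M₁) M₁, normQuad H k (p - k) v :=
    hL p v N₀ hN₀ M₁ (by omega) (by omega)
  set N₂ : ℤ := N₀ + 2*|p| + 1 with hN₂def
  have hannLp : ∀ (i : Fin d) (n : ℤ), N₂ ≤ n → H i n (L p v) = 0 := by
    intro i n hn
    rw [hLp, map_smul, map_sum, Finset.sum_eq_zero, smul_zero]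
    intro k hk
    have hk' := Finset.mem_Icc.mp hk
    exact annQ hcomm v hN₀ i (by omega) (by omega) (by omega)
  set M : ℤ := N₂ + |p| + |q| with hMdef
  have hq1 : L q v = (2:ℂ)⁻¹ • ∑ n ∈ Finset.Icc (-M) M, normQuad H n (q - n) v :=
    hL q v N₀ hN₀ M (by omega) (by omega)
  have hq2 : L q (L p v) = (2:ℂ)⁻¹ • ∑ n ∈ Finset.Icc (-M) M, normQuad H n (q - n) (L p v) :=
    hL q (L p v) N₂ hannLp M (by omega) (by omega)
  have hr : L (p+q) v = (2:ℂ)⁻¹ • ∑ n ∈ Finset.Icc (-M) M, normQuad H n ((p+q) - n) v :=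
    hL (p+q) v N₀ hN₀ M (by omega) (by omega)
  -- the function F
  set F : ℤ → π := fun m => ∑ j, H j m (H j (p+q-m) v) with hFdef
  have hFhigh : ∀ m : ℤ, N₀ ≤ m → F m = (if p+q = 0 then ((m:ℂ)*(d:ℂ)) else 0) • v := by
    intro m hm
    have e : ∀ j : Fin d, H j m (H j (p+q-m) v) = (if p+q = 0 then (m:ℂ) else 0) • v := by
      intro j
      rw [swapH hcomm j j m (p+q-m), hN₀ j m hm, map_zero, zero_add]
      congr 1
      by_cases h0 : p+q = 0
      · rw [if_pos ⟨rfl, by omega⟩, if_pos h0]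
      · rw [if_neg (by rintro ⟨-, h⟩; omega), if_neg h0]
    show (∑ j, H j m (H j (p+q-m) v)) = _
    rw [Finset.sum_congr rfl fun j _ => e j, Finset.sum_const, Finset.card_univ,
      Fintype.card_fin]
    by_cases h0 : p+q = 0
    · rw [if_pos h0, if_pos h0, ← Nat.cast_smul_eq_nsmul ℂ, smul_smul, mul_comm]
    · rw [if_neg h0, if_neg h0]; simp
  have hFlow : ∀ m : ℤ, N₀ ≤ p + q - m → F m = 0 := by
    intro m hm
    exact Finset.sum_eq_zero fun j _ => by rw [hN₀ j _ hm, map_zero]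
  -- main reduction
  set g : ℤ → π := fun m => ((m - p : ℤ):ℂ) • F m with hgdef
  set SF : π := ∑ n ∈ Finset.Icc (-M) M, F n with hSFdef
  set A : π := ∑ m ∈ Finset.Icc (p + -M) (p + M), g m with hAdef
  set B : π := ∑ m ∈ Finset.Icc (-M) M, g m with hBdef
  have main : L p (L q v) - L q (L p v)
      = (-(2:ℂ)⁻¹) • ((((q - p : ℤ):ℂ) • SF - B) + A) := by
    have hCn : ∀ n : ℤ,
        (∑ j, (((q-n : ℤ):ℂ) • H j n (H j (p+(q-n)) v)
          + ((n:ℤ):ℂ) • H j (p+n) (H j (q-n) v)))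
        = ((q-n : ℤ):ℂ) • F n + ((n:ℤ):ℂ) • F (p+n) := by
      intro n
      rw [Finset.sum_add_distrib, ← Finset.smul_sum, ← Finset.smul_sum]
      simp only [hFdef]
      rw [show p+(q-n) = p+q-n by ring, show p+q-(p+n) = q-n by ring]
    have reidx : ∑ n ∈ Finset.Icc (-M) M, ((n:ℤ):ℂ) • F (p+n) = A := by
      rw [hAdef, ← Finset.map_add_left_Icc, Finset.sum_map]
      refine Finset.sum_congr rfl fun n _ => ?_
      simp only [addLeftEmbedding_apply, hgdef]
      congr 1
      push_cast
      ring
    have split1 : ∑ n ∈ Finset.Icc (-M) M, ((q-n : ℤ):ℂ) • F n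
        = ((q - p : ℤ):ℂ) • SF - B := by
      rw [hSFdef, Finset.smul_sum, hBdef, ← Finset.sum_sub_distrib]
      refine Finset.sum_congr rfl fun n _ => ?_
      simp only [hgdef]
      match_scalars
      push_cast
      ring
    rw [hq2, hq1, map_smul, map_sum,
      Finset.sum_congr rfl (fun n _ => step2 hcomm hloc hL p n (q-n) v),
      Finset.sum_sub_distrib,
      Finset.sum_congr rfl (fun n _ => hCn n),
      Finset.sum_add_distrib, reidx, split1]
    module
  rw [main]
  -- evaluate SF
  set T : ℤ := ∑ m ∈ Finset.Icc 1 M, m with hTdef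
  have hSF : SF = (2:ℂ) • L (p+q) v + (if p+q = 0 then ((T:ℤ):ℂ)*(d:ℂ) else 0) • v := by
    have hQsum : ∑ n ∈ Finset.Icc (-M) M, normQuad H n ((p+q) - n) v = (2:ℂ) • L (p+q) v := by
      rw [hr, smul_smul]
      norm_num
    rw [hSFdef, Finset.sum_congr rfl (fun n _ => FQ hcomm v n (p+q-n)),
      Finset.sum_add_distrib]
    rw [hQsum]
    congr 1
    by_cases h0 : p+q = 0
    · rw [if_pos h0]
      have econd : ∀ n ∈ Finset.Icc (-M) M,
          (if p+q-n < n ∧ n + (p+q-n) = 0 then (n:ℂ)*(d:ℂ) else 0) • v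
          = if 0 < n then ((n:ℂ)*(d:ℂ)) • v else 0 := by
        intro n _
        by_cases hn : 0 < n
        · rw [if_pos (by omega), if_pos hn]
        · rw [if_neg (by omega), if_neg hn, zero_smul]
      rw [Finset.sum_congr rfl econd, ← Finset.sum_filter,
        show Finset.filter (fun n => 0 < n) (Finset.Icc (-M) M) = Finset.Icc 1 M by
          ext x; simp only [Finset.mem_filter, Finset.mem_Icc]; omega,
        ← Finset.sum_smul]
      congr 1
      rw [hTdef]
      push_cast
      rw [Finset.sum_mul]
    · rw [if_neg h0, zero_smul]
      refine Finset.sum_eq_zero fun n _ => ?_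
      rw [if_neg (by rintro ⟨-, h⟩; omega), zero_smul]
  -- boundary evaluation, case split
  by_cases hpq : p + q = 0
  · rw [if_pos hpq]
    have hqp : (q:ℂ) = -(p:ℂ) := by
      have : q = -p := by omega
      rw [this]; push_cast; ring
    rcases le_or_gt 0 p with hp | hp
    · -- 0 ≤ p
      set S : ℤ := ∑ m ∈ Finset.Icc (M+1) (p+M), (m-p)*m with hSdef
      have hEval : ∑ m ∈ Finset.Icc (M+1) (p+M), g m = ((S:ℤ):ℂ) • ((d:ℂ) • v) := by
        rw [hSdef]
        have e : ∀ m ∈ Finset.Icc (M+1) (p+M), g m = (((m-p)*m : ℤ):ℂ) • ((d:ℂ) • v) := by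
          intro m hm
          have hm' := Finset.mem_Icc.mp hm
          simp only [hgdef]
          rw [hFhigh m (by omega), if_pos hpq, smul_smul, smul_smul]
          congr 1
          push_cast
          ring
        rw [Finset.sum_congr rfl e, ← Finset.sum_smul]
        congr 1
        push_cast
        ring
      have hAB : A = B + ((S:ℤ):ℂ) • ((d:ℂ) • v) := by
        have s1 : ∑ m ∈ Finset.Icc (-M) (p+M), g m
            = B + ∑ m ∈ Finset.Icc (M+1) (p+M), g m :=
          Icc_split (by omega) (by omega) g
        have s2 : ∑ m ∈ Finset.Icc (-M) (p+M), g m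
            = (∑ m ∈ Finset.Icc (-M) (p-M-1), g m) + A := by
          have e := Icc_split (a := -M) (b := p-M-1) (c := p+M) (by omega) (by omega) g
          rw [show p-M-1+1 = p + -M by ring] at e
          rw [e]
        have low : ∑ m ∈ Finset.Icc (-M) (p-M-1), g m = 0 := by
          refine Finset.sum_eq_zero fun m hm => ?_
          have hm' := Finset.mem_Icc.mp hm
          simp only [hgdef]
          rw [hFlow m (by omega), smul_zero]
        rw [← hEval, ← s1, s2, low, zero_add]
      rw [hAB, hSF, if_pos hpq]
      have kp := keyPos p M hp (by omega)
      rw [← hSdef, ← hTdef] at kp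
      have kpC : 12*(p:ℂ)*((T:ℤ):ℂ) - 6*((S:ℤ):ℂ) = (p:ℂ)^3 - (p:ℂ) := by
        exact_mod_cast congrArg (fun z : ℤ => (z:ℂ)) kp
      match_scalars <;> push_cast <;>
        first
          | ring1
          | linear_combination ((d:ℂ)/12) * kpC + (-(2:ℂ)⁻¹*((T:ℤ):ℂ)*(d:ℂ)) * hqp
    · -- p < 0
      set S : ℤ := ∑ m ∈ Finset.Icc (p+M+1) M, (m-p)*m with hSdef
      have hEval : ∑ m ∈ Finset.Icc (p+M+1) M, g m = ((S:ℤ):ℂ) • ((d:ℂ) • v) := by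
        rw [hSdef]
        have e : ∀ m ∈ Finset.Icc (p+M+1) M, g m = (((m-p)*m : ℤ):ℂ) • ((d:ℂ) • v) := by
          intro m hm
          have hm' := Finset.mem_Icc.mp hm
          simp only [hgdef]
          rw [hFhigh m (by omega), if_pos hpq, smul_smul, smul_smul]
          congr 1
          push_cast
          ring
        rw [Finset.sum_congr rfl e, ← Finset.sum_smul]
        congr 1
        push_cast
        ring
      have hAB : A = B - ((S:ℤ):ℂ) • ((d:ℂ) • v) := by
        have s1 : ∑ m ∈ Finset.Icc (p + -M) M, g m
            = (∑ m ∈ Finset.Icc (p + -M) (-M-1), g m) + B := by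
          have e := Icc_split (a := p + -M) (b := -M-1) (c := M) (by omega) (by omega) g
          rw [show -M-1+1 = -M by ring] at e
          rw [e]
        have s2 : ∑ m ∈ Finset.Icc (p + -M) M, g m
            = A + ∑ m ∈ Finset.Icc (p+M+1) M, g m := by
          exact Icc_split (a := p + -M) (b := p+M) (c := M) (by omega) (by omega) g
        have low : ∑ m ∈ Finset.Icc (p + -M) (-M-1), g m = 0 := by
          refine Finset.sum_eq_zero fun m hm => ?_
          have hm' := Finset.mem_Icc.mp hm
          simp only [hgdef]
          rw [hFlow m (by omega), smul_zero]
        have : B = A + ((S:ℤ):ℂ) • ((d:ℂ) • v) := by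
          rw [← hEval, ← s2, s1, low, zero_add]
        rw [this]
        abel
      rw [hAB, hSF, if_pos hpq]
      have kp := keyNeg p M (by omega) (by omega)
      rw [← hSdef, ← hTdef] at kp
      have kpC : 12*(p:ℂ)*((T:ℤ):ℂ) + 6*((S:ℤ):ℂ) = (p:ℂ)^3 - (p:ℂ) := by
        exact_mod_cast congrArg (fun z : ℤ => (z:ℂ)) kp
      match_scalars <;> push_cast <;>
        first
          | ring1
          | linear_combination ((d:ℂ)/12) * kpC + (-(2:ℂ)⁻¹*((T:ℤ):ℂ)*(d:ℂ)) * hqp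
  · rw [if_neg hpq]
    have hg0 : ∀ m : ℤ, N₀ ≤ m → g m = 0 := by
      intro m hm
      simp only [hgdef]
      rw [hFhigh m hm, if_neg hpq, zero_smul, smul_zero]
    have hAB : A = B := by
      rcases le_or_gt 0 p with hp | hp
      · have s1 : ∑ m ∈ Finset.Icc (-M) (p+M), g m
            = B + ∑ m ∈ Finset.Icc (M+1) (p+M), g m :=
          Icc_split (by omega) (by omega) g
        have s2 : ∑ m ∈ Finset.Icc (-M) (p+M), g m
            = (∑ m ∈ Finset.Icc (-M) (p-M-1), g m) + A := by
          have e := Icc_split (a := -M) (b := p-M-1) (c := p+M) (by omega) (by omega) g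
          rw [show p-M-1+1 = p + -M by ring] at e
          rw [e]
        have low : ∑ m ∈ Finset.Icc (-M) (p-M-1), g m = 0 := by
          refine Finset.sum_eq_zero fun m hm => ?_
          have hm' := Finset.mem_Icc.mp hm
          simp only [hgdef]
          rw [hFlow m (by omega), smul_zero]
        have high : ∑ m ∈ Finset.Icc (M+1) (p+M), g m = 0 := by
          refine Finset.sum_eq_zero fun m hm => ?_
          have hm' := Finset.mem_Icc.mp hm
          exact hg0 m (by omega)
        rw [← zero_add A, ← low, ← s2, s1, high, add_zero]
      · have s1 : ∑ m ∈ Finset.Icc (p + -M) M, g m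
            = (∑ m ∈ Finset.Icc (p + -M) (-M-1), g m) + B := by
          have e := Icc_split (a := p + -M) (b := -M-1) (c := M) (by omega) (by omega) g
          rw [show -M-1+1 = -M by ring] at e
          rw [e]
        have s2 : ∑ m ∈ Finset.Icc (p + -M) M, g m
            = A + ∑ m ∈ Finset.Icc (p+M+1) M, g m := by
          exact Icc_split (a := p + -M) (b := p+M) (c := M) (by omega) (by omega) g
        have low : ∑ m ∈ Finset.Icc (p + -M) (-M-1), g m = 0 := by
          refine Finset.sum_eq_zero fun m hm => ?_
          have hm' := Finset.mem_Icc.mp hm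
          simp only [hgdef]
          rw [hFlow m (by omega), smul_zero]
        have high : ∑ m ∈ Finset.Icc (p+M+1) M, g m = 0 := by
          refine Finset.sum_eq_zero fun m hm => ?_
          have hm' := Finset.mem_Icc.mp hm
          exact hg0 m (by omega)
        rw [← zero_add B, ← low, ← s1, s2, high, add_zero]
    rw [hAB, hSF, if_neg hpq]
    match_scalars <;> push_cast <;> ring
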